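/- Let X be an alphabet indexed by a commutative monoid (I,×). The mulstuffle product, defined by 1⋆w = w⋆1 = w and x_i u ⋆ x_j v = x_i(u⋆x_j v) + x_j(x_i u⋆v) + x_{i×j}(u⋆v), is commutative and associative on A⟨X⟩. -/

import Mathlib

open Finsupp Finset Filter

/-- A word `w` seen as an element of the free module `A⟨X⟩` (coefficient 1). -/
noncomputable def delta (A : Type*) [CommRing A] {X : Type*} (w : List X) : List X →₀ A :=
  Finsupp.single w 1

/-- Left concatenation by a letter, as a linear map on `A⟨X⟩`. -/
noncomputable def lcons (A : Type*) [CommRing A] {X : Type*} (x : X) :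
    (List X →₀ A) →ₗ[A] (List X →₀ A) :=
  Finsupp.lmapDomain A A (List.cons x)

set_option maxHeartbeats 1000000

/-- the mulstuffle product (alphabet indexed by a commutative monoid `(I, ×)`,
bracket `x_i,x_j ↦ x_(i×j)`) is commutative and associative. -/
theorem stmt5 {A I : Type*} [CommRing A] [CommMonoid I]
    (star : (List I →₀ A) →ₗ[A] (List I →₀ A) →ₗ[A] (List I →₀ A))
    (hunitl : ∀ w : List I, star (delta A []) (delta A w) = delta A w)
    (hunitr : ∀ w : List I, star (delta A w) (delta A []) = delta A w)
    (hrec : ∀ (a b : I) (u v : List I),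
      star (delta A (a :: u)) (delta A (b :: v)) =
        lcons A a (star (delta A u) (delta A (b :: v)))
          + lcons A b (star (delta A (a :: u)) (delta A v))
          + lcons A (a * b) (star (delta A u) (delta A v))) :
    (∀ w₁ w₂ : List I, star (delta A w₁) (delta A w₂) = star (delta A w₂) (delta A w₁)) ∧
    (∀ w₁ w₂ w₃ : List I,
        star (star (delta A w₁) (delta A w₂)) (delta A w₃)
          = star (delta A w₁) (star (delta A w₂) (delta A w₃))) := by
  have hsingle : ∀ (w : List I) (r : A), Finsupp.single w r = r • delta A w := by
    intro w r; simp [delta]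
  have hlcons : ∀ (a : I) (w : List I), lcons A a (delta A w) = delta A (a :: w) := by
    intro a w; simp [lcons, delta]
  -- right unit for arbitrary elements
  have hunitr' : ∀ f : List I →₀ A, star f (delta A []) = f := by
    intro f
    induction f using Finsupp.induction_linear with
    | zero => simp
    | add f g hf hg => simp [map_add, LinearMap.add_apply, hf, hg]
    | single w r =>
      rw [hsingle, map_smul, LinearMap.smul_apply, hunitr]
  have hunitl' : ∀ f : List I →₀ A, star (delta A []) f = f := by
    intro f
    induction f using Finsupp.induction_linear with
    | zero => simp
    | add f g hf hg => simp [map_add, hf, hg]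
    | single w r => rw [hsingle, map_smul, hunitl]
  -- recursion for left argument `lcons a f` with arbitrary `f`
  have hrecl : ∀ (a c : I) (w : List I) (f : List I →₀ A),
      star (lcons A a f) (delta A (c :: w)) =
        lcons A a (star f (delta A (c :: w)))
          + lcons A c (star (lcons A a f) (delta A w))
          + lcons A (a * c) (star f (delta A w)) := by
    intro a c w f
    induction f using Finsupp.induction_linear with
    | zero => simp
    | add f g hf hg =>
      simp only [map_add, LinearMap.add_apply, hf, hg]; abel
    | single u r =>
      simp only [hsingle, map_smul, LinearMap.smul_apply, hlcons]
      rw [hrec a c u w]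
      simp only [smul_add]
  -- recursion for right argument `lcons c g` with arbitrary `g`
  have hrecr : ∀ (a c : I) (u : List I) (g : List I →₀ A),
      star (delta A (a :: u)) (lcons A c g) =
        lcons A a (star (delta A u) (lcons A c g))
          + lcons A c (star (delta A (a :: u)) g)
          + lcons A (a * c) (star (delta A u) g) := by
    intro a c u g
    induction g using Finsupp.induction_linear with
    | zero => simp
    | add f g hf hg =>
      simp only [map_add, hf, hg]; abel
    | single v r =>
      simp only [hsingle, map_smul, LinearMap.smul_apply, hlcons]
      rw [hrec a c u v]
      simp only [smul_add]
  constructor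
  · -- commutativity
    have key : ∀ n (w₁ w₂ : List I), w₁.length + w₂.length ≤ n →
        star (delta A w₁) (delta A w₂) = star (delta A w₂) (delta A w₁) := by
      intro n
      induction n with
      | zero =>
        intro w₁ w₂ h
        rcases w₁ with _ | ⟨a, u⟩
        · rw [hunitl, hunitr]
        · simp at h
      | succ n ih =>
        intro w₁ w₂ h
        rcases w₁ with _ | ⟨a, u⟩
        · rw [hunitl, hunitr]
        rcases w₂ with _ | ⟨b, v⟩
        · rw [hunitl, hunitr]
        simp only [List.length_cons] at h
        rw [hrec a b u v, hrec b a v u,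
          ih u (b :: v) (by simp; omega), ih (a :: u) v (by simp; omega),
          ih u v (by omega), mul_comm b a]
        abel
    exact fun w₁ w₂ => key (w₁.length + w₂.length) w₁ w₂ le_rfl
  · -- associativity
    have key : ∀ n (w₁ w₂ w₃ : List I), w₁.length + w₂.length + w₃.length ≤ n →
        star (star (delta A w₁) (delta A w₂)) (delta A w₃)
          = star (delta A w₁) (star (delta A w₂) (delta A w₃)) := by
      intro n
      induction n with
      | zero =>
        intro w₁ w₂ w₃ h
        rcases w₁ with _ | ⟨a, u⟩
        · rw [hunitl, hunitl']
        · simp at h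
      | succ n ih =>
        intro w₁ w₂ w₃ h
        rcases w₁ with _ | ⟨a, u⟩
        · rw [hunitl, hunitl']
        rcases w₂ with _ | ⟨b, v⟩
        · rw [hunitr, hunitl]
        rcases w₃ with _ | ⟨c, w⟩
        · rw [hunitr', hunitr]
        simp only [List.length_cons] at h
        have expandL :
            star (star (delta A (a :: u)) (delta A (b :: v))) (delta A (c :: w)) =
              lcons A a (star (star (delta A u) (delta A (b :: v))) (delta A (c :: w)))
            + lcons A b (star (star (delta A (a :: u)) (delta A v)) (delta A (c :: w)))
            + lcons A (a * b) (star (star (delta A u) (delta A v)) (delta A (c :: w)))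
            + lcons A c (star (star (delta A (a :: u)) (delta A (b :: v))) (delta A w))
            + lcons A (a * c) (star (star (delta A u) (delta A (b :: v))) (delta A w))
            + lcons A (b * c) (star (star (delta A (a :: u)) (delta A v)) (delta A w))
            + lcons A (a * b * c) (star (star (delta A u) (delta A v)) (delta A w)) := by
          have hc :
              lcons A c (star (lcons A a (star (delta A u) (delta A (b :: v)))) (delta A w))
            + lcons A c (star (lcons A b (star (delta A (a :: u)) (delta A v))) (delta A w))
            + lcons A c (star (lcons A (a * b) (star (delta A u) (delta A v))) (delta A w))
              = lcons A c (star (star (delta A (a :: u)) (delta A (b :: v))) (delta A w)) := by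
            rw [← map_add, ← map_add, ← LinearMap.add_apply, ← LinearMap.add_apply,
              ← map_add, ← map_add, ← hrec]
          calc star (star (delta A (a :: u)) (delta A (b :: v))) (delta A (c :: w))
              = star (lcons A a (star (delta A u) (delta A (b :: v)))) (delta A (c :: w))
              + star (lcons A b (star (delta A (a :: u)) (delta A v))) (delta A (c :: w))
              + star (lcons A (a * b) (star (delta A u) (delta A v))) (delta A (c :: w)) := by
                rw [hrec a b u v]; simp only [map_add, LinearMap.add_apply]
            _ = (lcons A a (star (star (delta A u) (delta A (b :: v))) (delta A (c :: w)))
                + lcons A c (star (lcons A a (star (delta A u) (delta A (b :: v)))) (delta A w))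
                + lcons A (a * c) (star (star (delta A u) (delta A (b :: v))) (delta A w)))
              + (lcons A b (star (star (delta A (a :: u)) (delta A v)) (delta A (c :: w)))
                + lcons A c (star (lcons A b (star (delta A (a :: u)) (delta A v))) (delta A w))
                + lcons A (b * c) (star (star (delta A (a :: u)) (delta A v)) (delta A w)))
              + (lcons A (a * b) (star (star (delta A u) (delta A v)) (delta A (c :: w)))
                + lcons A c (star (lcons A (a * b) (star (delta A u) (delta A v))) (delta A w))
                + lcons A (a * b * c) (star (star (delta A u) (delta A v)) (delta A w))) := by
                rw [hrecl a c w, hrecl b c w, hrecl (a * b) c w]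
            _ = (lcons A c (star (lcons A a (star (delta A u) (delta A (b :: v)))) (delta A w))
                + lcons A c (star (lcons A b (star (delta A (a :: u)) (delta A v))) (delta A w))
                + lcons A c (star (lcons A (a * b) (star (delta A u) (delta A v))) (delta A w)))
              + (lcons A a (star (star (delta A u) (delta A (b :: v))) (delta A (c :: w)))
                + lcons A b (star (star (delta A (a :: u)) (delta A v)) (delta A (c :: w)))
                + lcons A (a * b) (star (star (delta A u) (delta A v)) (delta A (c :: w)))
                + lcons A (a * c) (star (star (delta A u) (delta A (b :: v))) (delta A w))
                + lcons A (b * c) (star (star (delta A (a :: u)) (delta A v)) (delta A w))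
                + lcons A (a * b * c) (star (star (delta A u) (delta A v)) (delta A w))) := by
                abel
            _ = lcons A c (star (star (delta A (a :: u)) (delta A (b :: v))) (delta A w))
              + (lcons A a (star (star (delta A u) (delta A (b :: v))) (delta A (c :: w)))
                + lcons A b (star (star (delta A (a :: u)) (delta A v)) (delta A (c :: w)))
                + lcons A (a * b) (star (star (delta A u) (delta A v)) (delta A (c :: w)))
                + lcons A (a * c) (star (star (delta A u) (delta A (b :: v))) (delta A w))
                + lcons A (b * c) (star (star (delta A (a :: u)) (delta A v)) (delta A w))
                + lcons A (a * b * c) (star (star (delta A u) (delta A v)) (delta A w))) := by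
                rw [hc]
            _ = _ := by abel
        have expandR :
            star (delta A (a :: u)) (star (delta A (b :: v)) (delta A (c :: w))) =
              lcons A a (star (delta A u) (star (delta A (b :: v)) (delta A (c :: w))))
            + lcons A b (star (delta A (a :: u)) (star (delta A v) (delta A (c :: w))))
            + lcons A (a * b) (star (delta A u) (star (delta A v) (delta A (c :: w))))
            + lcons A c (star (delta A (a :: u)) (star (delta A (b :: v)) (delta A w)))
            + lcons A (a * c) (star (delta A u) (star (delta A (b :: v)) (delta A w)))
            + lcons A (b * c) (star (delta A (a :: u)) (star (delta A v) (delta A w)))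
            + lcons A (a * (b * c)) (star (delta A u) (star (delta A v) (delta A w))) := by
          have hc :
              lcons A a (star (delta A u) (lcons A b (star (delta A v) (delta A (c :: w)))))
            + lcons A a (star (delta A u) (lcons A c (star (delta A (b :: v)) (delta A w))))
            + lcons A a (star (delta A u) (lcons A (b * c) (star (delta A v) (delta A w))))
              = lcons A a (star (delta A u) (star (delta A (b :: v)) (delta A (c :: w)))) := by
            rw [← map_add, ← map_add, ← map_add, ← map_add, ← hrec]
          calc star (delta A (a :: u)) (star (delta A (b :: v)) (delta A (c :: w)))
              = star (delta A (a :: u)) (lcons A b (star (delta A v) (delta A (c :: w))))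
              + star (delta A (a :: u)) (lcons A c (star (delta A (b :: v)) (delta A w)))
              + star (delta A (a :: u)) (lcons A (b * c) (star (delta A v) (delta A w))) := by
                rw [hrec b c v w]; simp only [map_add]
            _ = (lcons A a (star (delta A u) (lcons A b (star (delta A v) (delta A (c :: w)))))
                + lcons A b (star (delta A (a :: u)) (star (delta A v) (delta A (c :: w))))
                + lcons A (a * b) (star (delta A u) (star (delta A v) (delta A (c :: w)))))
              + (lcons A a (star (delta A u) (lcons A c (star (delta A (b :: v)) (delta A w))))
                + lcons A c (star (delta A (a :: u)) (star (delta A (b :: v)) (delta A w)))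
                + lcons A (a * c) (star (delta A u) (star (delta A (b :: v)) (delta A w))))
              + (lcons A a (star (delta A u) (lcons A (b * c) (star (delta A v) (delta A w))))
                + lcons A (b * c) (star (delta A (a :: u)) (star (delta A v) (delta A w)))
                + lcons A (a * (b * c)) (star (delta A u) (star (delta A v) (delta A w)))) := by
                rw [hrecr a b u, hrecr a c u, hrecr a (b * c) u]
            _ = (lcons A a (star (delta A u) (lcons A b (star (delta A v) (delta A (c :: w)))))
                + lcons A a (star (delta A u) (lcons A c (star (delta A (b :: v)) (delta A w))))
                + lcons A a (star (delta A u) (lcons A (b * c) (star (delta A v) (delta A w)))))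
              + (lcons A b (star (delta A (a :: u)) (star (delta A v) (delta A (c :: w))))
                + lcons A (a * b) (star (delta A u) (star (delta A v) (delta A (c :: w))))
                + lcons A c (star (delta A (a :: u)) (star (delta A (b :: v)) (delta A w)))
                + lcons A (a * c) (star (delta A u) (star (delta A (b :: v)) (delta A w)))
                + lcons A (b * c) (star (delta A (a :: u)) (star (delta A v) (delta A w)))
                + lcons A (a * (b * c)) (star (delta A u) (star (delta A v) (delta A w)))) := by
                abel
            _ = lcons A a (star (delta A u) (star (delta A (b :: v)) (delta A (c :: w))))
              + (lcons A b (star (delta A (a :: u)) (star (delta A v) (delta A (c :: w))))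
                + lcons A (a * b) (star (delta A u) (star (delta A v) (delta A (c :: w))))
                + lcons A c (star (delta A (a :: u)) (star (delta A (b :: v)) (delta A w)))
                + lcons A (a * c) (star (delta A u) (star (delta A (b :: v)) (delta A w)))
                + lcons A (b * c) (star (delta A (a :: u)) (star (delta A v) (delta A w)))
                + lcons A (a * (b * c)) (star (delta A u) (star (delta A v) (delta A w)))) := by
                rw [hc]
            _ = _ := by abel
        rw [expandL, expandR,
          ih u (b :: v) (c :: w) (by simp; omega),
          ih (a :: u) v (c :: w) (by simp; omega),
          ih u v (c :: w) (by simp; omega),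
          ih (a :: u) (b :: v) w (by simp; omega),
          ih u (b :: v) w (by simp; omega),
          ih (a :: u) v w (by simp; omega),
          ih u v w (by omega),
          mul_assoc a b c]
    exact fun w₁ w₂ w₃ => key (w₁.length + w₂.length + w₃.length) w₁ w₂ w₃ le_rfl
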